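/- arXiv:2306.17065 — 5 statements merged into one kernel-verified Lean document; each statement's English description precedes it below -/
import Mathlib

section
/- Let H be a hereditary and union-closed class of graphs. Let G be a graph, let X be an H-deletion set in G, and let Z ⊆ V(G) be a weakly (H,ℓ)-separable set. Suppose there exists a subset X' ⊆ X of size 2ℓ+1 such that λ_G(Z,X') = 2ℓ+1. Then X' is redundant in X. -/
/-! Common definitions: rooted trees, graph classes, tree H-decompositions,
H-treewidth, separators, separations, (H,ℓ)-separations, deletion sets. -/

/-- A (finite) rooted tree, encoded by a finite node type together with a parent
function under which every node eventually reaches the root. -/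
structure RTree : Type 1 where
  ι : Type
  fin : Fintype ι
  root : ι
  parent : ι → ι
  parent_root : parent root = root
  wf : ∀ t : ι, ∃ n : ℕ, parent^[n] t = root

/-- The undirected graph underlying a rooted tree. -/
def RTree.graph (T : RTree) : SimpleGraph T.ι where
  Adj s t := s ≠ t ∧ (T.parent s = t ∨ T.parent t = s)
  symm := ⟨fun _ _ h => ⟨Ne.symm h.1, h.2.symm⟩⟩
  loopless := ⟨fun _ h => h.1 rfl⟩

/-- A leaf of a rooted tree: a node with no children. -/
def RTree.IsLeaf (T : RTree) (t : T.ι) : Prop :=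
  ∀ u : T.ι, T.parent u = t → u = t

/-- A class of (simple) graphs. -/
abbrev GraphClass : Type 1 := ∀ {α : Type}, SimpleGraph α → Prop

/-- A graph class is hereditary if it is closed under (isomorphic copies of)
induced subgraphs, i.e. closed under graph embeddings. -/
def Hereditary (H : GraphClass) : Prop :=
  ∀ {α β : Type} (G : SimpleGraph α) (G' : SimpleGraph β), H G → (G' ↪g G) → H G'

/-- A graph class is union-closed if it is closed under disjoint unions. -/
def UnionClosed (H : GraphClass) : Prop :=
  ∀ {α β : Type} (G₁ : SimpleGraph α) (G₂ : SimpleGraph β),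
    H G₁ → H G₂ → H (G₁ ⊕g G₂)

/-- The graph class `H` contains the graph with no vertices. -/
def ContainsNullGraph (H : GraphClass) : Prop :=
  ∀ (α : Type), IsEmpty α → ∀ G : SimpleGraph α, H G

variable {V : Type}

/-- `X` is an `H`-deletion set in `G` if `G - X` belongs to `H`. -/
def IsDeletionSet (H : GraphClass) (G : SimpleGraph V) (X : Set V) : Prop :=
  H (G.induce Xᶜ)

/-- `P` is an `(X,Y)`-separator in `G`: every walk from a vertex of `X` to a
vertex of `Y` contains a vertex of `P` (`P` may intersect `X ∪ Y`). -/
def IsSeparator (G : SimpleGraph V) (X Y P : Set V) : Prop :=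
  ∀ ⦃x y : V⦄, x ∈ X → y ∈ Y → ∀ p : G.Walk x y, ∃ v ∈ p.support, v ∈ P

/-- `λ_G(X,Y)`: the minimum size of an `(X,Y)`-separator in `G`. -/
noncomputable def lam (G : SimpleGraph V) (X Y : Set V) : ℕ :=
  sInf {n : ℕ | ∃ P : Set V, IsSeparator G X Y P ∧ P.ncard = n}

/-- `(A,B)` is a separation of `G`: `A ∪ B = V(G)` and there is no edge
between `A \ B` and `B \ A`. -/
def IsSeparation (G : SimpleGraph V) (A B : Set V) : Prop :=
  A ∪ B = Set.univ ∧ ∀ a ∈ A \ B, ∀ b ∈ B \ A, ¬ G.Adj a b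

/-- `(C,S)` is an `(H,ℓ)`-separation in `G`: `C` and `S` are disjoint,
`G[C] ∈ H`, `|S| ≤ ℓ` and `N_G(C) ⊆ S`. -/
def IsHSeparation (H : GraphClass) (G : SimpleGraph V) (ℓ : ℕ) (C S : Set V) : Prop :=
  Disjoint C S ∧ H (G.induce C) ∧ S.ncard ≤ ℓ ∧
    ∀ v ∈ C, ∀ u : V, G.Adj v u → u ∉ C → u ∈ S

/-- The separation `(C,S)` weakly covers `Z` if `Z ⊆ C ∪ S`. -/
def WeaklyCovers (C S Z : Set V) : Prop := Z ⊆ C ∪ S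

/-- `Z` is weakly `(H,ℓ)`-separable if some `(H,ℓ)`-separation weakly covers it. -/
def WeaklySeparable (H : GraphClass) (G : SimpleGraph V) (ℓ : ℕ) (Z : Set V) : Prop :=
  ∃ C S : Set V, IsHSeparation H G ℓ C S ∧ WeaklyCovers C S Z

/-- A subset `X'` of an `H`-deletion set `X` is redundant in `X` if it can be
replaced by a strictly smaller set. -/
def Redundant (H : GraphClass) (G : SimpleGraph V) (X X' : Set V) : Prop :=
  ∃ X'' : Set V, X''.ncard < X'.ncard ∧ IsDeletionSet H G ((X \ X') ∪ X'')

/-- The data `(T, χ, L)` of a candidate tree `H`-decomposition. -/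
structure PreDecomp (V : Type) : Type 1 where
  T : RTree
  χ : T.ι → Set V
  L : Set V

/-- `D = (T,χ,L)` is a tree `H`-decomposition of the subgraph of `G` induced by `W`:
(0) all bags and `L` are contained in `W`;
(1) for each `v ∈ W` the nodes whose bag contains `v` form a nonempty connected subtree;
(2) every edge of `G[W]` is contained in some bag;
(3) every `v ∈ L` is in a unique bag, which is at a leaf;
(4) for every node `t`, `G[χ(t) ∩ L] ∈ H`. -/
def IsTreeHDecompOn (H : GraphClass) (G : SimpleGraph V) (W : Set V) (D : PreDecomp V) : Prop :=
  (∀ t, D.χ t ⊆ W) ∧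
  D.L ⊆ W ∧
  (∀ v ∈ W, ((D.T.graph).induce {t | v ∈ D.χ t}).Connected) ∧
  (∀ u v : V, u ∈ W → v ∈ W → G.Adj u v → ∃ t, u ∈ D.χ t ∧ v ∈ D.χ t) ∧
  (∀ v ∈ D.L, ∃! t, v ∈ D.χ t) ∧
  (∀ v ∈ D.L, ∀ t, v ∈ D.χ t → D.T.IsLeaf t) ∧
  (∀ t, H (G.induce (D.χ t ∩ D.L)))

/-- `D` is a tree `H`-decomposition of `G`. -/
def IsTreeHDecomp (H : GraphClass) (G : SimpleGraph V) (D : PreDecomp V) : Prop :=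
  IsTreeHDecompOn H G Set.univ D

/-- The width of `(T,χ,L)`: `max(0, max_t |χ(t) \ L| - 1)`. -/
noncomputable def PreDecomp.width (D : PreDecomp V) : ℕ :=
  sSup (Set.range fun t => (D.χ t \ D.L).ncard) - 1

/-- The `H`-treewidth of `G`: the minimum width of a tree `H`-decomposition of `G`. -/
noncomputable def htw (H : GraphClass) (G : SimpleGraph V) : ℕ :=
  sInf {n : ℕ | ∃ D : PreDecomp V, IsTreeHDecomp H G D ∧ D.width = n}

/-- The class of all graphs. -/
def TrivialClass : GraphClass := fun {_} _ => True

/-- A standard tree decomposition: a tree `H`-decomposition with `L = ∅`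
(the choice of `H` is then irrelevant). -/
def IsTreeDecomp (G : SimpleGraph V) (D : PreDecomp V) : Prop :=
  IsTreeHDecomp TrivialClass G D ∧ D.L = ∅

/-- The treewidth of `G`. -/
noncomputable def tw (G : SimpleGraph V) : ℕ :=
  sInf {n : ℕ | ∃ D : PreDecomp V, IsTreeDecomp G D ∧ D.width = n}

private lemma walk_hits {V : Type} (G : SimpleGraph V) (C S : Set V)
    (hN : ∀ v ∈ C, ∀ u : V, G.Adj v u → u ∉ C → u ∈ S) :
    ∀ {x y : V} (p : G.Walk x y), x ∈ C → y ∉ C → ∃ v ∈ p.support, v ∈ S := by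
  intro x y p
  induction p with
  | nil => intro hx hy; exact absurd hx hy
  | @cons a b c h q ih =>
    intro hx hy
    by_cases hb : b ∈ C
    · obtain ⟨v, hv, hvS⟩ := ih hb hy
      exact ⟨v, by simp [SimpleGraph.Walk.support_cons, hv], hvS⟩
    · exact ⟨b, by simp [SimpleGraph.Walk.support_cons], hN a hx b h hb⟩

/-- if `X` is an `H`-deletion set, `Z` is weakly `(H,ℓ)`-separable
and `X' ⊆ X` has size `2ℓ+1` with `λ_G(Z,X') = 2ℓ+1`, then `X'` is redundant in `X`. -/
theorem redundant_of_large_flow {V : Type} [Fintype V] (H : GraphClass)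
    (hher : Hereditary H) (hun : UnionClosed H)
    (G : SimpleGraph V) (X : Set V) (hX : IsDeletionSet H G X)
    (ℓ : ℕ) (Z : Set V) (hZ : WeaklySeparable H G ℓ Z)
    (X' : Set V) (hX'sub : X' ⊆ X) (hX'card : X'.ncard = 2 * ℓ + 1)
    (hlam : lam G Z X' = 2 * ℓ + 1) :
    Redundant H G X X' := by
  obtain ⟨C, S, ⟨hdisj, hHC, hScard, hN⟩, hcov⟩ := hZ
  set X'' := S ∪ (X' \ C) with hX''def
  -- S ∪ (X' ∩ C) is a (Z, X')-separator
  have hsep : IsSeparator G Z X' (S ∪ (X' ∩ C)) := by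
    intro z x hz hx p
    rcases hcov hz with hzC | hzS
    · by_cases hxC : x ∈ C
      · exact ⟨x, p.end_mem_support, Or.inr ⟨hx, hxC⟩⟩
      · obtain ⟨v, hv, hvS⟩ := walk_hits G C S hN p hzC hxC
        exact ⟨v, hv, Or.inl hvS⟩
    · exact ⟨z, p.start_mem_support, Or.inl hzS⟩
  have hge : lam G Z X' ≤ (S ∪ (X' ∩ C)).ncard :=
    Nat.sInf_le ⟨_, hsep, rfl⟩
  rw [hlam] at hge
  have h1 : (S ∪ (X' ∩ C)).ncard ≤ S.ncard + (X' ∩ C).ncard := Set.ncard_union_le _ _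
  have h2 : (X' ∩ C).ncard + (X' \ C).ncard = X'.ncard :=
    Set.ncard_inter_add_ncard_diff_eq_ncard X' C (Set.toFinite X')
  have hX''le : X''.ncard ≤ S.ncard + (X' \ C).ncard := Set.ncard_union_le _ _
  have hcard : X''.ncard < X'.ncard := by omega
  refine ⟨X'', hcard, ?_⟩
  set Y := (X \ X') ∪ X'' with hYdef
  have hSY : S ⊆ Y := fun v hv => Or.inr (Or.inl hv)
  have hBX : ∀ v : V, v ∈ Yᶜ → v ∉ C → v ∈ Xᶜ := by
    intro v hvY hvC hvX
    by_cases hv' : v ∈ X'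
    · exact hvY (Or.inr (Or.inr ⟨hv', hvC⟩))
    · exact hvY (Or.inl ⟨hvX, hv'⟩)
  -- split G - Y into the part inside C and the part outside C
  have hA : H (G.induce (Yᶜ ∩ C)) :=
    hher _ _ hHC (SimpleGraph.induceHomOfLE G (Set.inter_subset_right))
  have hB : H (G.induce (Yᶜ \ C)) :=
    hher _ _ hX (SimpleGraph.induceHomOfLE G (fun v hv => hBX v hv.1 hv.2))
  have hsum : H (G.induce (Yᶜ ∩ C) ⊕g G.induce (Yᶜ \ C)) := hun _ _ hA hB
  refine hher _ _ hsum ?_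
  classical
  refine ⟨⟨fun v => if h : (v : V) ∈ C then Sum.inl ⟨v, Set.mem_inter v.2 h⟩ else Sum.inr ⟨v, Set.mem_diff_of_mem v.2 h⟩, ?_⟩, ?_⟩
  · intro u v huv
    dsimp only at huv
    split_ifs at huv <;> injection huv with h <;>
      exact Subtype.ext (Subtype.mk_eq_mk.mp h)
  · intro u v
    constructor
    · intro h
      change (_ ⊕g _).Adj (dite ((u : V) ∈ C) _ _) (dite ((v : V) ∈ C) _ _) at h
      split_ifs at h with hu hv hv
      · exact h
      · exact absurd h Bool.false_ne_true
      · exact absurd h Bool.false_ne_true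
      · exact h
    · intro h
      have hG : G.Adj (u : V) (v : V) := h
      change (_ ⊕g _).Adj (dite ((u : V) ∈ C) _ _) (dite ((v : V) ∈ C) _ _)
      split_ifs with hu hv hv
      · exact hG
      · exact (v.2 (hSY (hN u hu v hG hv))).elim
      · exact (u.2 (hSY (hN v hv u hG.symm hu))).elim
      · exact hG
end

section
/- Let H be a hereditary and union-closed class of graphs, let G be a graph, let X be an H-deletion set in G, and let C, S ⊆ V(G) be disjoint sets with G[C] ∈ H and N_G(C) ⊆ S. Then (X \ C) ∪ S is an H-deletion set in G. -/
variable {V : Type}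

/-- if `X` is an `H`-deletion set and `C, S` are disjoint with
`G[C] ∈ H` and `N_G(C) ⊆ S`, then `(X \ C) ∪ S` is an `H`-deletion set. -/
theorem deletionSet_exchange {V : Type} [Fintype V] (H : GraphClass)
    (hher : Hereditary H) (hun : UnionClosed H)
    (G : SimpleGraph V) (X : Set V) (hX : IsDeletionSet H G X)
    (C S : Set V) (hdisj : Disjoint C S) (hC : H (G.induce C))
    (hN : ∀ v ∈ C, ∀ u : V, G.Adj v u → u ∉ C → u ∈ S) :
    IsDeletionSet H G ((X \ C) ∪ S) := by
  classical
  set B : Set V := Xᶜ ∩ Cᶜ ∩ Sᶜ with hB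
  -- G.induce B embeds into G.induce Xᶜ
  have hBemb : (G.induce B) ↪g (G.induce Xᶜ) :=
    ⟨⟨fun v => ⟨v.1, v.2.1.1⟩, fun u v h => by simpa [Subtype.ext_iff] using h⟩,
      by intro u v; simp [SimpleGraph.comap]; exact Iff.rfl⟩
  have hBH : H (G.induce B) := hher _ _ hX hBemb
  have hsum : H ((G.induce C) ⊕g (G.induce B)) := hun _ _ hC hBH
  -- now embed G.induce ((X \ C) ∪ S)ᶜ into the sum
  set A : Set V := ((X \ C) ∪ S)ᶜ with hA
  have hmem : ∀ v : V, v ∈ A → v ∉ C → v ∈ B := by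
    intro v hv hvC
    simp only [hA, Set.mem_compl_iff, Set.mem_union, Set.mem_diff] at hv
    push_neg at hv
    exact ⟨⟨fun hvX => hvC (hv.1 hvX), hvC⟩, hv.2⟩
  have hCnotS : ∀ v : V, v ∈ C → v ∈ A := by
    intro v hv
    simp only [hA, Set.mem_compl_iff, Set.mem_union, Set.mem_diff]
    push_neg
    exact ⟨fun _ => hv, Set.disjoint_left.mp hdisj hv⟩
  let f : A → (C : Set V) ⊕ (B : Set V) := fun v =>
    if h : (v : V) ∈ C then Sum.inl ⟨v, h⟩ else Sum.inr ⟨v, hmem v v.2 h⟩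
  have hval : ∀ v : A, Sum.elim Subtype.val Subtype.val (f v) = (v : V) := by
    intro v; by_cases h : (v : V) ∈ C <;> simp [f, h]
  have hinj : Function.Injective f := by
    intro u v h
    have h2 := congrArg (Sum.elim Subtype.val Subtype.val) h
    rw [hval u, hval v] at h2
    exact Subtype.ext h2
  have hadj : ∀ u v : A,
      ((G.induce C) ⊕g (G.induce B)).Adj (f u) (f v) ↔ G.Adj u v := by
    intro u v
    by_cases hu : (u : V) ∈ C <;> by_cases hv : (v : V) ∈ C <;>
      simp only [f, dif_pos, dif_neg, hu, hv, dite_true, dite_false]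
    · simp [SimpleGraph.comap]
    · simp only [SimpleGraph.sum_adj]
      constructor
      · exact fun h => h.elim
      · intro h
        exact absurd (hN u hu v h hv) (hmem v v.2 hv).2
    · simp only [SimpleGraph.sum_adj]
      constructor
      · exact fun h => h.elim
      · intro h
        exact absurd (hN v hv u h.symm hu) (hmem u u.2 hu).2
    · simp [SimpleGraph.comap]
  have hemb : (G.induce A) ↪g ((G.induce C) ⊕g (G.induce B)) :=
    ⟨⟨f, hinj⟩, fun {u v} => hadj u v⟩
  exact hher _ _ hsum hemb
end

section
/- Let H be a hereditary and union-closed class of graphs, let G be a graph with htw(G) ≤ k, let X be an H-deletion set in G, and let S ⊆ V(G) be a set of size 3k+4. Then at least one of the following holds: (1) there is a partition S = S_A ∪ S_B into disjoint parts with |S_A| ≤ 2k+2, |S_B| ≤ 2k+2 and λ_G(S_A,S_B) ≤ k+1; (2) there exists S' ⊆ S with |S'| = 2k+3 and λ_G(S',X) ≤ 2k+2; (3) there exists X' ⊆ X with |X'| = 2k+3 that is redundant in X. -/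
variable {V : Type}

namespace RTreeAux

lemma iterate_root (T : RTree) (n : ℕ) : T.parent^[n] T.root = T.root := by
  induction n with
  | zero => rfl
  | succ n ih => rw [Function.iterate_succ_apply', ih, T.parent_root]

lemma eq_root_of_cycle (T : RTree) {a : T.ι} {m : ℕ} (hm : 0 < m)
    (h : T.parent^[m] a = a) : a = T.root := by
  obtain ⟨N, hN⟩ := T.wf a
  have hq : ∀ q : ℕ, T.parent^[q * m] a = a := by
    intro q
    induction q with
    | zero => simp
    | succ q ih => rw [Nat.succ_mul, Function.iterate_add_apply, h, ih]
  have hge : N ≤ (N + 1) * m := by nlinarith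
  have : T.parent^[(N + 1) * m] a = a := hq (N + 1)
  rw [show (N + 1) * m = ((N + 1) * m - N) + N by omega, Function.iterate_add_apply, hN,
    iterate_root] at this
  exact this.symm

open Classical in
/-- The region of a node `u` relative to deleted node `t₀`. -/
noncomputable def region (T : RTree) (t₀ u : T.ι) : T.ι :=
  if h : (∃ m, T.parent^[m] u = t₀) ∧ u ≠ t₀ then
    T.parent^[sInf {m | T.parent^[m] u = t₀} - 1] u
  else t₀

lemma region_eq_of_parent (T : RTree) (t₀ : T.ι) {u v : T.ι} (hu : u ≠ t₀) (hv : v ≠ t₀)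
    (h : T.parent u = v) : region T t₀ u = region T t₀ v := by
  by_cases hev : ∃ m, T.parent^[m] v = t₀
  · have heu : ∃ m, T.parent^[m] u = t₀ := by
      obtain ⟨m, hm⟩ := hev
      exact ⟨m + 1, by rw [Function.iterate_succ_apply, h]; exact hm⟩
    set su := sInf {m | T.parent^[m] u = t₀} with hsu_def
    set sv := sInf {m | T.parent^[m] v = t₀} with hsv_def
    have hsu_mem : T.parent^[su] u = t₀ := Nat.sInf_mem heu
    have hsv_mem : T.parent^[sv] v = t₀ := Nat.sInf_mem hev
    have hsu_pos : 0 < su := by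
      rcases Nat.eq_zero_or_pos su with h0 | h0
      · exact absurd (by rw [h0] at hsu_mem; exact hsu_mem) hu
      · exact h0
    have hsv_pos : 0 < sv := by
      rcases Nat.eq_zero_or_pos sv with h0 | h0
      · exact absurd (by rw [h0] at hsv_mem; exact hsv_mem) hv
      · exact h0
    have h1 : T.parent^[su - 1] v = t₀ := by
      rw [← h, ← Function.iterate_succ_apply T.parent (su - 1) u,
        Nat.succ_eq_add_one (su - 1), show su - 1 + 1 = su by omega]
      exact hsu_mem
    have h2 : T.parent^[sv + 1] u = t₀ := by
      rw [Function.iterate_succ_apply, h]; exact hsv_mem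
    have hle1 : sv ≤ su - 1 := Nat.sInf_le h1
    have hle2 : su ≤ sv + 1 := Nat.sInf_le h2
    have heq : su = sv + 1 := by omega
    rw [region, dif_pos ⟨heu, hu⟩, region, dif_pos ⟨hev, hv⟩, ← hsu_def, ← hsv_def, heq]
    rw [show sv + 1 - 1 = (sv - 1) + 1 by omega, Function.iterate_succ_apply, h]
  · have heu : ¬∃ m, T.parent^[m] u = t₀ := by
      rintro ⟨m, hm⟩
      match m with
      | 0 => exact hu hm
      | Nat.succ m =>
        exact hev ⟨m, by rw [Function.iterate_succ_apply, h] at hm; exact hm⟩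
    rw [region, dif_neg (by tauto), region, dif_neg (by tauto)]

lemma region_child (T : RTree) {t₀ u c : T.ι} (hu : u ≠ t₀) (hc : region T t₀ u = c)
    (hct : c ≠ t₀) : T.parent c = t₀ ∧ ∃ m, T.parent^[m] u = c := by
  rw [region] at hc
  split_ifs at hc with h
  · set su := sInf {m | T.parent^[m] u = t₀} with hsu_def
    have hsu_mem : T.parent^[su] u = t₀ := Nat.sInf_mem h.1
    have hsu_pos : 0 < su := by
      rcases Nat.eq_zero_or_pos su with h0 | h0
      · exact absurd (by rw [h0] at hsu_mem; exact hsu_mem) hu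
      · exact h0
    refine ⟨?_, su - 1, hc⟩
    rw [← hc, ← Function.iterate_succ_apply' T.parent (su - 1) u,
      Nat.succ_eq_add_one (su - 1), show su - 1 + 1 = su by omega]
    exact hsu_mem
  · exact absurd hc.symm hct

lemma region_up (T : RTree) {t₀ u : T.ι} (hu : u ≠ t₀) (hup : region T t₀ u = t₀) :
    ¬∃ m, T.parent^[m] u = t₀ := by
  intro hex
  rw [region, dif_pos ⟨hex, hu⟩] at hup
  set su := sInf {m | T.parent^[m] u = t₀} with hsu_def
  have hsu_mem : T.parent^[su] u = t₀ := Nat.sInf_mem hex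
  have hsu_pos : 0 < su := by
    rcases Nat.eq_zero_or_pos su with h0 | h0
    · exact absurd (by rw [h0] at hsu_mem; exact hsu_mem) hu
    · exact h0
  have : su ≤ su - 1 := Nat.sInf_le hup
  omega

lemma region_adj (T : RTree) (t₀ : T.ι) {u v : T.ι} (hu : u ≠ t₀) (hv : v ≠ t₀)
    (h : T.graph.Adj u v) : region T t₀ u = region T t₀ v := by
  rcases h.2 with h' | h'
  · exact region_eq_of_parent T t₀ hu hv h'
  · exact (region_eq_of_parent T t₀ hv hu h').symm

lemma region_const_of_connected (T : RTree) (t₀ : T.ι) {N : Set T.ι}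
    (hN : ((T.graph).induce N).Connected) (ht₀ : t₀ ∉ N) {a b : T.ι}
    (ha : a ∈ N) (hb : b ∈ N) : region T t₀ a = region T t₀ b := by
  obtain ⟨w⟩ := hN.preconnected ⟨a, ha⟩ ⟨b, hb⟩
  have : ∀ (x y : N) (_ : ((T.graph).induce N).Walk x y),
      region T t₀ x.1 = region T t₀ y.1 := by
    intro x y p
    induction p with
    | nil => rfl
    | cons hadj p ih =>
      rename_i x' z' _
      have : T.graph.Adj x'.1 z'.1 := hadj
      exact (region_adj T t₀ (fun he => ht₀ (he ▸ x'.2)) (fun he => ht₀ (he ▸ z'.2)) this).trans ih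
  exact this ⟨a, ha⟩ ⟨b, hb⟩ w

end RTreeAux


/-- if `htw(G) ≤ k`, `X` is an `H`-deletion set and `|S| = 3k+4`,
then `S` has a balanced split with a small separator, or some `S' ⊆ S` of size
`2k+3` has `λ_G(S',X) ≤ 2k+2`, or some `X' ⊆ X` of size `2k+3` is redundant in `X`. -/
theorem split_or_base_or_redundant {V : Type} [Fintype V] (H : GraphClass)
    (hher : Hereditary H) (hun : UnionClosed H)
    (G : SimpleGraph V) (k : ℕ) (hk : htw H G ≤ k)
    (X : Set V) (hX : IsDeletionSet H G X)
    (S : Set V) (hS : S.ncard = 3 * k + 4) :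
    (∃ SA SB : Set V, SA ∪ SB = S ∧ Disjoint SA SB ∧
      SA.ncard ≤ 2 * k + 2 ∧ SB.ncard ≤ 2 * k + 2 ∧ lam G SA SB ≤ k + 1) ∨
    (∃ S' : Set V, S' ⊆ S ∧ S'.ncard = 2 * k + 3 ∧ lam G S' X ≤ 2 * k + 2) ∨
    (∃ X' : Set V, X' ⊆ X ∧ X'.ncard = 2 * k + 3 ∧ Redundant H G X X') := by
  classical
  -- Step 0: if X is small, option 2 is immediate.
  by_cases hXsm : X.ncard ≤ 2 * k + 2
  · refine Or.inr (Or.inl ?_)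
    obtain ⟨S', hS'sub, hS'card⟩ :=
      Set.exists_subset_card_eq (show 2 * k + 3 ≤ S.ncard by rw [hS]; omega)
    refine ⟨S', hS'sub, hS'card, ?_⟩
    have hsep : IsSeparator G S' X X := fun x y _ hy p => ⟨y, p.end_mem_support, hy⟩
    exact le_trans (Nat.sInf_le ⟨X, hsep, rfl⟩) hXsm
  push_neg at hXsm
  -- Step 1: extract a tree H-decomposition of width ≤ k.
  have hne : {n : ℕ | ∃ D : PreDecomp V, IsTreeHDecomp H G D ∧ D.width = n}.Nonempty := by
    refine ⟨_, ⟨⟨⟨PUnit, inferInstance, PUnit.unit, id, rfl, fun t => ⟨0, by cases t; rfl⟩⟩,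
      fun _ => Set.univ, Xᶜ⟩, ⟨?_, ?_, ?_, ?_, ?_, ?_, ?_⟩, rfl⟩⟩
    · exact fun _ => Set.subset_univ _
    · exact Set.subset_univ _
    · intro v _
      rw [SimpleGraph.connected_iff_exists_forall_reachable]
      refine ⟨⟨PUnit.unit, Set.mem_univ v⟩, fun w => ?_⟩
      have hab : (⟨PUnit.unit, Set.mem_univ v⟩ : {t : PUnit // v ∈ (Set.univ : Set V)}) = w :=
        Subtype.ext (Subsingleton.elim _ _)
      exact hab ▸ SimpleGraph.Reachable.refl _
    · exact fun u v _ _ _ => ⟨PUnit.unit, Set.mem_univ u, Set.mem_univ v⟩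
    · exact fun v _ => ⟨PUnit.unit, Set.mem_univ v, fun y _ => Subsingleton.elim y _⟩
    · exact fun v _ t _ u _ => Subsingleton.elim u t
    · intro t
      exact hher (G.induce Xᶜ) (G.induce (Set.univ ∩ Xᶜ)) hX
        (G.induceHomOfLE Set.inter_subset_right)
  obtain ⟨D, hD, hDw⟩ := Nat.sInf_mem hne
  have hwid : D.width ≤ k := by rw [hDw]; exact hk
  obtain ⟨h0, hL0, h3, h4, h5, h6, h7⟩ := hD
  have hbag : ∀ t, (D.χ t \ D.L).ncard ≤ k + 1 := by
    intro t
    have hb : ∀ t', (D.χ t' \ D.L).ncard ≤ Fintype.card V := by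
      intro t'
      have h1 : (D.χ t' \ D.L).ncard ≤ (Set.univ : Set V).ncard :=
        Set.ncard_le_ncard (Set.subset_univ _) (Set.toFinite _)
      rwa [Set.ncard_univ, Nat.card_eq_fintype_card] at h1
    have h1 : (D.χ t \ D.L).ncard ≤ sSup (Set.range fun t => (D.χ t \ D.L).ncard) :=
      le_csSup ⟨Fintype.card V, by rintro x ⟨t', rfl⟩; exact hb t'⟩ ⟨t, rfl⟩
    have h2 : sSup (Set.range fun t => (D.χ t \ D.L).ncard) - 1 ≤ k := hwid
    -- width 0 edge case: if the sSup is 0 then every bag has ncard 0 ≤ k+1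
    omega
  have hnode : ∀ v : V, ∃ t, v ∈ D.χ t := by
    intro v
    obtain ⟨⟨t, ht⟩⟩ := (h3 v (Set.mem_univ v)).nonempty
    exact ⟨t, ht⟩
  choose nod hnod using hnode
  haveI : Fintype D.T.ι := D.T.fin
  -- Step 2: centroid node t₀.
  have hrootM : D.T.root ∈
      {t : D.T.ι | k + 2 ≤ {s | s ∈ S ∧ ∃ j, D.T.parent^[j] (nod s) = t}.ncard} := by
    have heq : {s | s ∈ S ∧ ∃ j, D.T.parent^[j] (nod s) = D.T.root} = S := by
      ext s; exact ⟨fun h => h.1, fun h => ⟨h, D.T.wf _⟩⟩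
    show k + 2 ≤ _
    rw [heq, hS]; omega
  obtain ⟨t₀, ht₀M, ht₀min⟩ := Set.exists_min_image
    {t : D.T.ι | k + 2 ≤ {s | s ∈ S ∧ ∃ j, D.T.parent^[j] (nod s) = t}.ncard}
    (fun t => {u : D.T.ι | ∃ j, D.T.parent^[j] u = t}.ncard) (Set.toFinite _) ⟨_, hrootM⟩
  have ht₀M' : k + 2 ≤ {s | s ∈ S ∧ ∃ j, D.T.parent^[j] (nod s) = t₀}.ncard := ht₀M
  have hchild : ∀ c, D.T.parent c = t₀ → c ≠ t₀ →
      {s | s ∈ S ∧ ∃ j, D.T.parent^[j] (nod s) = c}.ncard ≤ k + 1 := by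
    intro c hpc hct
    by_contra hcon; push_neg at hcon
    have hcM : c ∈ {t : D.T.ι |
        k + 2 ≤ {s | s ∈ S ∧ ∃ j, D.T.parent^[j] (nod s) = t}.ncard} := by
      show k + 2 ≤ _; omega
    have hd := ht₀min c hcM
    have hsub : {u : D.T.ι | ∃ j, D.T.parent^[j] u = c} ⊂
        {u : D.T.ι | ∃ j, D.T.parent^[j] u = t₀} := by
      constructor
      · rintro u ⟨j, hj⟩
        exact ⟨j + 1, by rw [Function.iterate_succ_apply', hj, hpc]⟩
      · intro hsub'
        obtain ⟨j, hj⟩ := hsub' (⟨0, rfl⟩ : t₀ ∈ {u : D.T.ι | ∃ j, D.T.parent^[j] u = t₀})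
        have hcyc : D.T.parent^[j + 1] t₀ = t₀ := by
          rw [Function.iterate_succ_apply', hj, hpc]
        have hroot : t₀ = D.T.root := RTreeAux.eq_root_of_cycle D.T (Nat.succ_pos j) hcyc
        rw [hroot, RTreeAux.iterate_root] at hj
        exact hct (hj.symm.trans hroot.symm)
    have := Set.ncard_lt_ncard hsub (Set.toFinite _)
    omega
  have hupbound : {s | s ∈ S ∧ ¬∃ j, D.T.parent^[j] (nod s) = t₀}.ncard ≤ 2 * k + 2 := by
    have hdisj : Disjoint {s | s ∈ S ∧ ¬∃ j, D.T.parent^[j] (nod s) = t₀}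
        {s | s ∈ S ∧ ∃ j, D.T.parent^[j] (nod s) = t₀} :=
      Set.disjoint_left.mpr fun a ha hb => ha.2 hb.2
    have huni : {s | s ∈ S ∧ ¬∃ j, D.T.parent^[j] (nod s) = t₀} ∪
        {s | s ∈ S ∧ ∃ j, D.T.parent^[j] (nod s) = t₀} = S := by
      ext a
      constructor
      · rintro (h | h) <;> exact h.1
      · intro h
        by_cases hex : ∃ j, D.T.parent^[j] (nod a) = t₀
        · exact Or.inr ⟨h, hex⟩
        · exact Or.inl ⟨h, hex⟩
    have hcard := Set.ncard_union_eq hdisj (Set.toFinite _) (Set.toFinite _)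
    rw [huni, hS] at hcard
    omega
  set C : Set V := D.χ t₀ ∩ D.L with hCdef
  set Bb : Set V := D.χ t₀ \ D.L with hBdef
  have hBbcard : Bb.ncard ≤ k + 1 := hbag t₀
  have hCnbr : ∀ v ∈ C, ∀ u, G.Adj v u → u ∈ D.χ t₀ := by
    intro v hv u hadj
    obtain ⟨t, hvt, hut⟩ := h4 v u (Set.mem_univ v) (Set.mem_univ u) hadj
    obtain ⟨t', ht', huniq⟩ := h5 v hv.2
    have : t = t₀ := (huniq t hvt).trans (huniq t₀ hv.1).symm
    rwa [this] at hut
  by_cases hbig : 2 * k + 3 ≤ (S ∩ D.χ t₀).ncard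
  · -- Options 2 or 3 depending on |X ∩ C|.
    by_cases hXC : (X ∩ C).ncard ≤ k + 1
    · -- Option 2
      refine Or.inr (Or.inl ?_)
      obtain ⟨S', hS'sub, hS'card⟩ := Set.exists_subset_card_eq hbig
      refine ⟨S', hS'sub.trans Set.inter_subset_left, hS'card, ?_⟩
      have hexit : ∀ (y x : V) (p : G.Walk x y), x ∈ C → y ∈ X →
          ∃ v ∈ p.support, v ∈ Bb ∪ (X ∩ C) := by
        intro y x p
        induction p with
        | nil => exact fun hx hy => ⟨_, SimpleGraph.Walk.start_mem_support _, Or.inr ⟨hy, hx⟩⟩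
        | cons hadj q ih =>
          rename_i a b c
          intro hx hy
          by_cases hbC : b ∈ C
          · obtain ⟨v, hv1, hv2⟩ := ih hbC hy
            refine ⟨v, ?_, hv2⟩
            rw [SimpleGraph.Walk.support_cons]
            exact List.mem_cons_of_mem _ hv1
          · have hbχ : b ∈ D.χ t₀ := hCnbr a hx b hadj
            refine ⟨b, ?_, Or.inl ⟨hbχ, fun hL => hbC ⟨hbχ, hL⟩⟩⟩
            rw [SimpleGraph.Walk.support_cons]
            exact List.mem_cons_of_mem _ q.start_mem_support
      have hsep : IsSeparator G S' X (Bb ∪ (X ∩ C)) := by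
        intro x y hx hy p
        have hxχ : x ∈ D.χ t₀ := (hS'sub hx).2
        by_cases hxL : x ∈ D.L
        · exact hexit y x p ⟨hxχ, hxL⟩ hy
        · exact ⟨x, p.start_mem_support, Or.inl ⟨hxχ, hxL⟩⟩
      have hcard : (Bb ∪ (X ∩ C)).ncard ≤ 2 * k + 2 :=
        le_trans (Set.ncard_union_le _ _) (by omega)
      exact le_trans (Nat.sInf_le ⟨_, hsep, rfl⟩) hcard
    · -- Option 3
      push_neg at hXC
      refine Or.inr (Or.inr ?_)
      obtain ⟨B₁, hB₁sub, hB₁card⟩ :=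
        Set.exists_subset_card_eq (min_le_right (2 * k + 3) ((X ∩ C).ncard))
      have hXdiff : (X \ C).ncard = X.ncard - (X ∩ C).ncard := by
        rw [show X \ C = X \ (X ∩ C) from (Set.diff_self_inter).symm]
        exact Set.ncard_diff Set.inter_subset_left
      have h2 : 2 * k + 3 - min (2 * k + 3) ((X ∩ C).ncard) ≤ (X \ C).ncard := by omega
      obtain ⟨B₂, hB₂sub, hB₂card⟩ := Set.exists_subset_card_eq h2
      have hdisj12 : Disjoint B₁ B₂ :=
        Set.disjoint_left.mpr fun a ha1 ha2 => (hB₂sub ha2).2 (hB₁sub ha1).2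
      have hX'card : (B₁ ∪ B₂).ncard = 2 * k + 3 := by
        rw [Set.ncard_union_eq hdisj12 (Set.toFinite _) (Set.toFinite _), hB₁card, hB₂card]
        omega
      refine ⟨B₁ ∪ B₂, Set.union_subset (hB₁sub.trans Set.inter_subset_left)
        (hB₂sub.trans Set.diff_subset), hX'card, Bb ∪ B₂, ?_, ?_⟩
      · have hle : (Bb ∪ B₂).ncard ≤ (k + 1) + (2 * k + 3 - min (2 * k + 3) ((X ∩ C).ncard)) :=
          le_trans (Set.ncard_union_le _ _) (by omega)
        rw [hX'card]
        omega
      · -- deletion set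
        have hsubY : (X \ C) ∪ Bb ⊆ (X \ (B₁ ∪ B₂)) ∪ (Bb ∪ B₂) := by
          rintro x (hx | hx)
          · by_cases h1 : x ∈ B₁
            · exact absurd (hB₁sub h1).2 hx.2
            · by_cases hq : x ∈ B₂
              · exact Or.inr (Or.inr hq)
              · exact Or.inl ⟨hx.1, fun hh => hh.elim h1 hq⟩
          · exact Or.inr (Or.inl hx)
        have hZsub : ((X \ (B₁ ∪ B₂)) ∪ (Bb ∪ B₂))ᶜ ⊆ ((X \ C) ∪ Bb)ᶜ :=
          Set.compl_subset_compl.mpr hsubY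
        have hZX : ∀ v : V, v ∈ ((X \ C) ∪ Bb)ᶜ → v ∉ C → v ∈ Xᶜ :=
          fun v hv hvC hvX => hv (Or.inl ⟨hvX, hvC⟩)
        have hnoedge : ∀ c ∈ C, ∀ z ∈ ((X \ C) ∪ Bb)ᶜ, z ∉ C → ¬ G.Adj c z := by
          intro c hc z hz hzC hadj
          have hzχ : z ∈ D.χ t₀ := hCnbr c hc z hadj
          exact hz (Or.inr ⟨hzχ, fun hL => hzC ⟨hzχ, hL⟩⟩)
        have hsum : H ((G.induce C) ⊕g (G.induce Xᶜ)) := hun _ _ (h7 t₀) hX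
        show H (G.induce _)
        refine hher _ _ ?_ (G.induceHomOfLE hZsub)
        refine hher _ _ hsum ⟨⟨fun z => if h : (z : V) ∈ C then Sum.inl ⟨z.1, h⟩
          else Sum.inr ⟨z.1, hZX z.1 z.2 h⟩, ?_⟩, ?_⟩
        · intro a b hab
          by_cases ha : (a : V) ∈ C <;> by_cases hb : (b : V) ∈ C <;>
            simp [ha, hb] at hab <;> exact Subtype.ext hab
        · intro a b
          show (G.induce C ⊕g G.induce Xᶜ).Adj
            (if h : (a : V) ∈ C then Sum.inl ⟨a.1, h⟩ else Sum.inr ⟨a.1, hZX a.1 a.2 h⟩)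
            (if h : (b : V) ∈ C then Sum.inl ⟨b.1, h⟩ else Sum.inr ⟨b.1, hZX b.1 b.2 h⟩) ↔ _
          by_cases ha : (a : V) ∈ C <;> by_cases hb : (b : V) ∈ C
          · rw [dif_pos ha, dif_pos hb]; exact Iff.rfl
          · rw [dif_pos ha, dif_neg hb]
            simp only [SimpleGraph.sum_adj]
            exact iff_of_false (fun h => h) (fun h => hnoedge a ha b.1 b.2 hb h)
          · rw [dif_neg ha, dif_pos hb]
            simp only [SimpleGraph.sum_adj]
            exact iff_of_false (fun h => h) (fun h => hnoedge b hb a.1 a.2 ha h.symm)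
          · rw [dif_neg ha, dif_neg hb]; exact Iff.rfl
  · -- Option 1: balanced split
    push_neg at hbig
    refine Or.inl ?_
    let cls : V → V ⊕ Option D.T.ι := fun v =>
      if v ∈ Bb then Sum.inl v else if v ∈ C then Sum.inr none
      else Sum.inr (some (RTreeAux.region D.T t₀ (nod v)))
    have hclsB : ∀ v ∈ Bb, cls v = Sum.inl v := fun v hv => if_pos hv
    have hclsC : ∀ v, v ∉ Bb → v ∈ C → cls v = Sum.inr none := by
      intro v h1 h2
      show (if _ then _ else _) = _
      rw [if_neg h1, if_pos h2]
    have hclsR : ∀ v, v ∉ Bb → v ∉ C →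
        cls v = Sum.inr (some (RTreeAux.region D.T t₀ (nod v))) := by
      intro v h1 h2
      show (if _ then _ else _) = _
      rw [if_neg h1, if_neg h2]
    have hχ : ∀ v, v ∉ Bb → v ∉ C → v ∉ D.χ t₀ := by
      intro v h1 h2 hv
      by_cases hL : v ∈ D.L
      · exact h2 ⟨hv, hL⟩
      · exact h1 ⟨hv, hL⟩
    have hnodne : ∀ v, v ∉ D.χ t₀ → nod v ≠ t₀ := fun v hv he => hv (he ▸ hnod v)
    have hreg : ∀ u v : V, u ∉ D.χ t₀ → v ∉ D.χ t₀ → G.Adj u v →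
        RTreeAux.region D.T t₀ (nod u) = RTreeAux.region D.T t₀ (nod v) := by
      intro u v hu hv hadj
      obtain ⟨t, hut, hvt⟩ := h4 u v (Set.mem_univ u) (Set.mem_univ v) hadj
      have h1 := RTreeAux.region_const_of_connected D.T t₀ (h3 u (Set.mem_univ u)) hu
        (hnod u) hut
      have h2 := RTreeAux.region_const_of_connected D.T t₀ (h3 v (Set.mem_univ v)) hv
        hvt (hnod v)
      exact h1.trans h2
    have hclsadj : ∀ u v : V, u ∉ Bb → v ∉ Bb → G.Adj u v → cls u = cls v := by
      intro u v hu hv hadj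
      by_cases huC : u ∈ C <;> by_cases hvC : v ∈ C
      · rw [hclsC u hu huC, hclsC v hv hvC]
      · have hvχ : v ∈ D.χ t₀ := hCnbr u huC v hadj
        exact absurd (⟨hvχ, fun hL => hvC ⟨hvχ, hL⟩⟩ : v ∈ Bb) hv
      · have huχ : u ∈ D.χ t₀ := hCnbr v hvC u hadj.symm
        exact absurd (⟨huχ, fun hL => huC ⟨huχ, hL⟩⟩ : u ∈ Bb) hu
      · rw [hclsR u hu huC, hclsR v hv hvC, hreg u v (hχ u hu huC) (hχ v hv hvC) hadj]
    have hwalk : ∀ (y x : V) (p : G.Walk x y), (∀ v ∈ p.support, v ∉ Bb) → cls x = cls y := by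
      intro y x p
      induction p with
      | nil => exact fun _ => rfl
      | cons hadj q ih =>
        rename_i a b c
        intro hsup
        have hmem : ∀ v ∈ q.support, v ∈ (SimpleGraph.Walk.cons hadj q).support := by
          intro v hv
          rw [SimpleGraph.Walk.support_cons]
          exact List.mem_cons_of_mem _ hv
        have h1 : a ∉ Bb := hsup a (SimpleGraph.Walk.start_mem_support _)
        have h2 : b ∉ Bb := hsup b (hmem b q.start_mem_support)
        exact (hclsadj a b h1 h2 hadj).trans (ih fun v hv => hsup v (hmem v hv))
    have hclsbound : ∀ s₀ ∈ S, {y | y ∈ S ∧ cls y = cls s₀}.ncard ≤ 2 * k + 2 := by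
      intro s₀ hs₀
      by_cases hB0 : s₀ ∈ Bb
      · have hsub : {y | y ∈ S ∧ cls y = cls s₀} ⊆ {s₀} := by
          intro y hy
          have h2 := hy.2
          rw [hclsB s₀ hB0] at h2
          by_cases hyB : y ∈ Bb
          · rw [hclsB y hyB] at h2
            exact Set.mem_singleton_iff.mpr (Sum.inl_injective h2)
          · by_cases hyC : y ∈ C
            · rw [hclsC y hyB hyC] at h2; exact absurd h2 (by simp)
            · rw [hclsR y hyB hyC] at h2; exact absurd h2 (by simp)
        have := Set.ncard_le_ncard hsub (Set.toFinite _)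
        rw [Set.ncard_singleton] at this
        omega
      · by_cases hC0 : s₀ ∈ C
        · have hsub : {y | y ∈ S ∧ cls y = cls s₀} ⊆ S ∩ D.χ t₀ := by
            intro y hy
            have h2 := hy.2
            rw [hclsC s₀ hB0 hC0] at h2
            by_cases hyB : y ∈ Bb
            · rw [hclsB y hyB] at h2; exact absurd h2 (by simp)
            · by_cases hyC : y ∈ C
              · exact ⟨hy.1, hyC.1⟩
              · rw [hclsR y hyB hyC] at h2; exact absurd h2 (by simp)
          have := Set.ncard_le_ncard hsub (Set.toFinite _)
          omega
        · have hs₀χ := hχ s₀ hB0 hC0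
          by_cases hcase : RTreeAux.region D.T t₀ (nod s₀) = t₀
          · have hsub : {y | y ∈ S ∧ cls y = cls s₀} ⊆
                {s | s ∈ S ∧ ¬∃ j, D.T.parent^[j] (nod s) = t₀} := by
              intro y hy
              refine ⟨hy.1, ?_⟩
              have h2 := hy.2
              rw [hclsR s₀ hB0 hC0] at h2
              by_cases hyB : y ∈ Bb
              · rw [hclsB y hyB] at h2; exact absurd h2 (by simp)
              by_cases hyC : y ∈ C
              · rw [hclsC y hyB hyC] at h2; exact absurd h2 (by simp)
              rw [hclsR y hyB hyC] at h2
              have h3 : RTreeAux.region D.T t₀ (nod y) = RTreeAux.region D.T t₀ (nod s₀) := by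
                simpa using h2
              exact RTreeAux.region_up D.T (hnodne y (hχ y hyB hyC)) (h3.trans hcase)
            have := Set.ncard_le_ncard hsub (Set.toFinite _)
            omega
          · obtain ⟨hpc, -⟩ := RTreeAux.region_child D.T (hnodne s₀ hs₀χ) rfl hcase
            have hsub : {y | y ∈ S ∧ cls y = cls s₀} ⊆
                {s | s ∈ S ∧ ∃ j, D.T.parent^[j] (nod s) = RTreeAux.region D.T t₀ (nod s₀)} := by
              intro y hy
              refine ⟨hy.1, ?_⟩
              have h2 := hy.2
              rw [hclsR s₀ hB0 hC0] at h2
              by_cases hyB : y ∈ Bb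
              · rw [hclsB y hyB] at h2; exact absurd h2 (by simp)
              by_cases hyC : y ∈ C
              · rw [hclsC y hyB hyC] at h2; exact absurd h2 (by simp)
              rw [hclsR y hyB hyC] at h2
              have h3 : RTreeAux.region D.T t₀ (nod y) = RTreeAux.region D.T t₀ (nod s₀) := by
                simpa using h2
              obtain ⟨-, m, hm⟩ := RTreeAux.region_child D.T (hnodne y (hχ y hyB hyC)) h3 hcase
              exact ⟨m, hm⟩
            have hfc := hchild _ hpc hcase
            have := Set.ncard_le_ncard hsub (Set.toFinite _)
            omega
    -- minimal closed subset of S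
    have hMM : {m : ℕ | ∃ A : Set V, (A ⊆ S ∧ (∀ a ∈ A, ∀ y ∈ S, cls y = cls a → y ∈ A) ∧
        k + 2 ≤ A.ncard) ∧ A.ncard = m}.Nonempty :=
      ⟨S.ncard, ⟨S, ⟨subset_rfl, fun _ _ y hy _ => hy, by rw [hS]; omega⟩, rfl⟩⟩
    obtain ⟨A, ⟨hAS, hAcl, hAge⟩, hAm⟩ := Nat.sInf_mem hMM
    have hmin : ∀ A' : Set V, A' ⊆ S → (∀ a ∈ A', ∀ y ∈ S, cls y = cls a → y ∈ A') →
        k + 2 ≤ A'.ncard → A.ncard ≤ A'.ncard := by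
      intro A' h1 h2' h3'
      rw [hAm]
      exact Nat.sInf_le ⟨A', ⟨h1, h2', h3'⟩, rfl⟩
    have hA2 : A.ncard ≤ 2 * k + 2 := by
      by_contra hcon
      push_neg at hcon
      obtain ⟨s₀, hs₀A⟩ : A.Nonempty := Set.nonempty_of_ncard_ne_zero (by omega)
      have hs₀S := hAS hs₀A
      have hKsub : {y | y ∈ S ∧ cls y = cls s₀} ⊆ A := fun y hy => hAcl s₀ hs₀A y hy.1 hy.2
      have hKb := hclsbound s₀ hs₀S
      have hKne : {y | y ∈ S ∧ cls y = cls s₀}.Nonempty :=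
        ⟨s₀, show s₀ ∈ S ∧ cls s₀ = cls s₀ from ⟨hs₀S, rfl⟩⟩
      have hKpos : 0 < {y | y ∈ S ∧ cls y = cls s₀}.ncard :=
        hKne.ncard_pos (Set.toFinite _)
      by_cases hK : k + 2 ≤ {y | y ∈ S ∧ cls y = cls s₀}.ncard
      · have := hmin {y | y ∈ S ∧ cls y = cls s₀} (fun y hy => hy.1)
          (fun a ha y hyS hcy => ⟨hyS, hcy.trans ha.2⟩) hK
        omega
      · push_neg at hK
        have hdiff : (A \ {y | y ∈ S ∧ cls y = cls s₀}).ncard =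
            A.ncard - {y | y ∈ S ∧ cls y = cls s₀}.ncard := Set.ncard_diff hKsub
        have hcl' : ∀ a ∈ A \ {y | y ∈ S ∧ cls y = cls s₀}, ∀ y ∈ S,
            cls y = cls a → y ∈ A \ {y | y ∈ S ∧ cls y = cls s₀} := by
          intro a ha y hyS hcy
          exact ⟨hAcl a ha.1 y hyS hcy, fun hyK => ha.2 ⟨hAS ha.1, hcy.symm.trans hyK.2⟩⟩
        have := hmin _ (fun y hy => hAS hy.1) hcl' (by omega)
        omega
    refine ⟨A, S \ A, Set.union_diff_cancel hAS, Set.disjoint_sdiff_right, hA2, ?_, ?_⟩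
    · have hd : (S \ A).ncard = S.ncard - A.ncard := Set.ncard_diff hAS
      rw [hd, hS]
      omega
    · have hsepB : IsSeparator G A (S \ A) Bb := by
        intro x y hx hy p
        by_contra hcon
        push_neg at hcon
        exact hy.2 (hAcl x hx y hy.1 (hwalk y x p hcon).symm)
      exact le_trans (Nat.sInf_le ⟨Bb, hsepB, rfl⟩) hBbcard
end

section
/- Let H be a class of graphs containing the 0-vertex graph, let G be a graph and let (A,B) be a separation of G. Let (T_A,χ_A,L_A) be a tree H-decomposition of G[A] with root r_A and let (T_B,χ_B,L_B) be a tree H-decomposition of G[B] with root r_B. Let S_A, S_B ⊆ V(G) satisfy A∩B ⊆ S_A ⊆ χ_A(r_A), S_A ∩ L_A = ∅, A∩B ⊆ S_B ⊆ χ_B(r_B), and S_B ∩ L_B = ∅. Form (T,χ,L) by taking the disjoint union of T_A and T_B, adding a new root node r whose children are r_A and r_B, letting χ agree with χ_A on T_A and with χ_B on T_B, setting χ(r) = S_A ∪ S_B, and setting L = L_A ∪ L_B. Then (T,χ,L) is a tree H-decomposition of G, and its width is at most the maximum of the width of (T_A,χ_A,L_A), the width of (T_B,χ_B,L_B), and |S_A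 ∪ S_B| − 1. -/
variable {V : Type}

open scoped Classical in
/-- The parent function of the merge of two rooted trees: a new root `none`
whose children are the two old roots. -/
noncomputable def mergeParent (TA TB : RTree) :
    Option (TA.ι ⊕ TB.ι) → Option (TA.ι ⊕ TB.ι) := fun t =>
  match t with
  | none => none
  | some (Sum.inl a) => if a = TA.root then none else some (Sum.inl (TA.parent a))
  | some (Sum.inr b) => if b = TB.root then none else some (Sum.inr (TB.parent b))

/-- The merge of two rooted trees: take their disjoint union and insert a new
root node whose children are the two old roots. -/
noncomputable def RTree.merge (TA TB : RTree) : RTree where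
  ι := Option (TA.ι ⊕ TB.ι)
  fin := by letI := TA.fin; letI := TB.fin; infer_instance
  root := none
  parent := mergeParent TA TB
  parent_root := rfl
  wf := by
    have keyA : ∀ (n : ℕ) (a : TA.ι), TA.parent^[n] a = TA.root →
        ∃ m : ℕ, (mergeParent TA TB)^[m] (some (Sum.inl a)) = none := by
      intro n
      induction n with
      | zero =>
        intro a ha
        simp only [Function.iterate_zero, id_eq] at ha
        exact ⟨1, by simp [mergeParent, ha]⟩
      | succ n ih =>
        intro a ha
        by_cases h : a = TA.root
        · exact ⟨1, by simp [mergeParent, h]⟩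
        · obtain ⟨m, hm⟩ := ih (TA.parent a)
            (by rw [← Function.iterate_succ_apply]; exact ha)
          refine ⟨m + 1, ?_⟩
          rw [Function.iterate_succ_apply]
          have hstep : mergeParent TA TB (some (Sum.inl a))
              = some (Sum.inl (TA.parent a)) := by simp [mergeParent, h]
          rw [hstep]; exact hm
    have keyB : ∀ (n : ℕ) (b : TB.ι), TB.parent^[n] b = TB.root →
        ∃ m : ℕ, (mergeParent TA TB)^[m] (some (Sum.inr b)) = none := by
      intro n
      induction n with
      | zero =>
        intro b hb
        simp only [Function.iterate_zero, id_eq] at hb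
        exact ⟨1, by simp [mergeParent, hb]⟩
      | succ n ih =>
        intro b hb
        by_cases h : b = TB.root
        · exact ⟨1, by simp [mergeParent, h]⟩
        · obtain ⟨m, hm⟩ := ih (TB.parent b)
            (by rw [← Function.iterate_succ_apply]; exact hb)
          refine ⟨m + 1, ?_⟩
          rw [Function.iterate_succ_apply]
          have hstep : mergeParent TA TB (some (Sum.inr b))
              = some (Sum.inr (TB.parent b)) := by simp [mergeParent, h]
          rw [hstep]; exact hm
    intro t
    match t with
    | none => exact ⟨0, rfl⟩
    | some (Sum.inl a) => obtain ⟨n, hn⟩ := TA.wf a; exact keyA n a hn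
    | some (Sum.inr b) => obtain ⟨n, hn⟩ := TB.wf b; exact keyB n b hn

/-- The merge of two candidate tree `H`-decompositions along a root bag `R`:
take the disjoint union of the two trees, add a new root `r` whose children are
the two old roots, give `r` the bag `R`, keep all other bags, and take the
union of the two sets `L`. -/
noncomputable def mergeDecomp {V : Type} (DA DB : PreDecomp V) (R : Set V) :
    PreDecomp V where
  T := DA.T.merge DB.T
  χ := fun t =>
    match t with
    | none => R
    | some (Sum.inl a) => DA.χ a
    | some (Sum.inr b) => DB.χ b
  L := DA.L ∪ DB.L

section Helpers

lemma reach_image_mono {W W' : Type} {G1 : SimpleGraph W} {G2 : SimpleGraph W'}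
    (f : G1 ↪g G2) {S : Set W} {T : Set W'} (hST : ∀ a ∈ S, f a ∈ T)
    {x y : W} (hx : x ∈ S) (hy : y ∈ S)
    (hr : (G1.induce S).Reachable ⟨x, hx⟩ ⟨y, hy⟩) :
    (G2.induce T).Reachable ⟨f x, hST x hx⟩ ⟨f y, hST y hy⟩ := by
  let φ : G1.induce S →g G2.induce T :=
    { toFun := fun u => ⟨f u.1, hST u.1 u.2⟩
      map_rel' := fun {u v} a => f.map_adj_iff.mpr a }
  exact hr.map φ

lemma connected_of_base {W : Type} {G' : SimpleGraph W} {S : Set W} {x0 : W} (hx0 : x0 ∈ S)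
    (h : ∀ z (hz : z ∈ S), (G'.induce S).Reachable ⟨z, hz⟩ ⟨x0, hx0⟩) :
    (G'.induce S).Connected := by
  rw [SimpleGraph.connected_iff]
  exact ⟨fun u v => (h u.1 u.2).trans (h v.1 v.2).symm, ⟨⟨x0, hx0⟩⟩⟩

lemma merge_adj_inl (TA TB : RTree) (a b : TA.ι) :
    (TA.merge TB).graph.Adj (some (Sum.inl a)) (some (Sum.inl b)) ↔ TA.graph.Adj a b := by
  simp only [RTree.graph, RTree.merge, mergeParent]
  constructor
  · rintro ⟨hne, h | h⟩
    · by_cases hr : a = TA.root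
      · simp [hr] at h
      · simp [hr] at h
        exact ⟨by simpa using hne, Or.inl h⟩
    · by_cases hr : b = TA.root
      · simp [hr] at h
      · simp [hr] at h
        exact ⟨by simpa using hne, Or.inr h⟩
  · rintro ⟨hne, h | h⟩
    · have hr : a ≠ TA.root := by
        rintro rfl; rw [TA.parent_root] at h; exact hne h
      exact ⟨by simpa using hne, Or.inl (by simp [hr, h])⟩
    · have hr : b ≠ TA.root := by
        rintro rfl; rw [TA.parent_root] at h; exact hne h.symm
      exact ⟨by simpa using hne, Or.inr (by simp [hr, h])⟩

lemma merge_adj_inr (TA TB : RTree) (a b : TB.ι) :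
    (TA.merge TB).graph.Adj (some (Sum.inr a)) (some (Sum.inr b)) ↔ TB.graph.Adj a b := by
  simp only [RTree.graph, RTree.merge, mergeParent]
  constructor
  · rintro ⟨hne, h | h⟩
    · by_cases hr : a = TB.root
      · simp [hr] at h
      · simp [hr] at h
        exact ⟨by simpa using hne, Or.inl h⟩
    · by_cases hr : b = TB.root
      · simp [hr] at h
      · simp [hr] at h
        exact ⟨by simpa using hne, Or.inr h⟩
  · rintro ⟨hne, h | h⟩
    · have hr : a ≠ TB.root := by
        rintro rfl; rw [TB.parent_root] at h; exact hne h
      exact ⟨by simpa using hne, Or.inl (by simp [hr, h])⟩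
    · have hr : b ≠ TB.root := by
        rintro rfl; rw [TB.parent_root] at h; exact hne h.symm
      exact ⟨by simpa using hne, Or.inr (by simp [hr, h])⟩

noncomputable def mergeEmbA (TA TB : RTree) : TA.graph ↪g (TA.merge TB).graph where
  toFun a := some (Sum.inl a)
  inj' := fun a b h => Sum.inl_injective (Option.some_injective _ h)
  map_rel_iff' := merge_adj_inl TA TB _ _

noncomputable def mergeEmbB (TA TB : RTree) : TB.graph ↪g (TA.merge TB).graph where
  toFun b := some (Sum.inr b)
  inj' := fun a b h => Sum.inr_injective (Option.some_injective _ h)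
  map_rel_iff' := merge_adj_inr TA TB _ _

lemma merge_adj_rootA (TA TB : RTree) :
    (TA.merge TB).graph.Adj (some (Sum.inl TA.root)) none :=
  ⟨Option.some_ne_none _, Or.inl (by simp [RTree.merge, mergeParent])⟩

lemma merge_adj_rootB (TA TB : RTree) :
    (TA.merge TB).graph.Adj (some (Sum.inr TB.root)) none :=
  ⟨Option.some_ne_none _, Or.inl (by simp [RTree.merge, mergeParent])⟩

end Helpers

/-- let `(A,B)` be a separation of `G`, let `D_A = (T_A,χ_A,L_A)`
and `D_B = (T_B,χ_B,L_B)` be tree `H`-decompositions of `G[A]` and `G[B]` with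
roots `r_A`, `r_B`, and let `S_A, S_B` satisfy `A∩B ⊆ S_A ⊆ χ_A(r_A)`,
`S_A ∩ L_A = ∅`, `A∩B ⊆ S_B ⊆ χ_B(r_B)`, `S_B ∩ L_B = ∅`. If `H` contains the
graph with no vertices, then the merge of `D_A` and `D_B` along the new root
bag `S_A ∪ S_B` is a tree `H`-decomposition of `G`, of width at most the
maximum of the widths of `D_A` and `D_B` and `|S_A ∪ S_B| - 1`. -/
theorem merge_isTreeHDecomp {V : Type} [Fintype V] (H : GraphClass)
    (hnull : ContainsNullGraph H) (G : SimpleGraph V)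
    (A B : Set V) (hsep : IsSeparation G A B)
    (DA DB : PreDecomp V)
    (hDA : IsTreeHDecompOn H G A DA) (hDB : IsTreeHDecompOn H G B DB)
    (SA SB : Set V)
    (hSA1 : A ∩ B ⊆ SA) (hSA2 : SA ⊆ DA.χ DA.T.root) (hSA3 : SA ∩ DA.L = ∅)
    (hSB1 : A ∩ B ⊆ SB) (hSB2 : SB ⊆ DB.χ DB.T.root) (hSB3 : SB ∩ DB.L = ∅) :
    IsTreeHDecomp H G (mergeDecomp DA DB (SA ∪ SB)) ∧
      (mergeDecomp DA DB (SA ∪ SB)).width ≤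
        max (max DA.width DB.width) ((SA ∪ SB).ncard - 1) := by
  obtain ⟨hA0, hA0', hA1, hA2, hA3, hA4, hA5⟩ := hDA
  obtain ⟨hB0, hB0', hB1, hB2, hB3, hB4, hB5⟩ := hDB
  have hSAA : SA ⊆ A := hSA2.trans (hA0 _)
  have hSBB : SB ⊆ B := hSB2.trans (hB0 _)
  have hABA : ∀ v, v ∈ A → v ∈ B → v ∈ SA := fun v ha hb => hSA1 ⟨ha, hb⟩
  have hABB : ∀ v, v ∈ A → v ∈ B → v ∈ SB := fun v ha hb => hSB1 ⟨ha, hb⟩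
  have hSA3' : ∀ v, v ∈ SA → v ∈ DA.L → False := fun v h1 h2 => by
    have hm : v ∈ SA ∩ DA.L := ⟨h1, h2⟩
    rw [hSA3] at hm; exact hm
  have hSB3' : ∀ v, v ∈ SB → v ∈ DB.L → False := fun v h1 h2 => by
    have hm : v ∈ SB ∩ DB.L := ⟨h1, h2⟩
    rw [hSB3] at hm; exact hm
  have hALB : ∀ v, v ∈ A → v ∈ DB.L → False := fun v ha hl =>
    hSB3' v (hABB v ha (hB0' hl)) hl
  have hBLA : ∀ v, v ∈ B → v ∈ DA.L → False := fun v hb hl =>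
    hSA3' v (hABA v (hA0' hl) hb) hl
  refine ⟨⟨fun t => Set.subset_univ _, Set.subset_univ _, ?_, ?_, ?_, ?_, ?_⟩, ?_⟩
  · -- connectivity of the set of bags containing v
    intro v _
    by_cases hvS : v ∈ SA ∪ SB
    · refine connected_of_base (x0 := none) hvS ?_
      rintro (_ | (a | b)) hz
      · exact SimpleGraph.Reachable.refl _
      · have hz' : v ∈ DA.χ a := hz
        have hvA : v ∈ A := hA0 a hz'
        have hvsa : v ∈ SA := by
          rcases hvS with h | h
          · exact h
          · exact hABA v hvA (hSBB h)
        have hroot : v ∈ DA.χ DA.T.root := hSA2 hvsa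
        have hre : (DA.T.graph.induce {t | v ∈ DA.χ t}).Reachable ⟨a, hz'⟩
            ⟨DA.T.root, hroot⟩ := (hA1 v hvA).preconnected _ _
        have hmap := reach_image_mono (mergeEmbA DA.T DB.T)
          (T := {t | v ∈ (mergeDecomp DA DB (SA ∪ SB)).χ t})
          (fun t ht => ht) hz' hroot hre
        exact hmap.trans (SimpleGraph.Adj.reachable
          (by exact merge_adj_rootA DA.T DB.T))
      · have hz' : v ∈ DB.χ b := hz
        have hvB : v ∈ B := hB0 b hz'
        have hvsb : v ∈ SB := by
          rcases hvS with h | h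
          · exact hABB v (hSAA h) hvB
          · exact h
        have hroot : v ∈ DB.χ DB.T.root := hSB2 hvsb
        have hre : (DB.T.graph.induce {t | v ∈ DB.χ t}).Reachable ⟨b, hz'⟩
            ⟨DB.T.root, hroot⟩ := (hB1 v hvB).preconnected _ _
        have hmap := reach_image_mono (mergeEmbB DA.T DB.T)
          (T := {t | v ∈ (mergeDecomp DA DB (SA ∪ SB)).χ t})
          (fun t ht => ht) hz' hroot hre
        exact hmap.trans (SimpleGraph.Adj.reachable
          (by exact merge_adj_rootB DA.T DB.T))
    · have hvAB : v ∈ A ∪ B := by rw [hsep.1]; exact Set.mem_univ v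
      have hnot : ¬ (v ∈ A ∧ v ∈ B) := fun h => hvS (Or.inl (hABA v h.1 h.2))
      rcases hvAB with hvA | hvB
      · have hvB : v ∉ B := fun hb => hnot ⟨hvA, hb⟩
        obtain ⟨⟨a0, ha0⟩⟩ := (hA1 v hvA).nonempty
        refine connected_of_base (x0 := some (Sum.inl a0)) ha0 ?_
        rintro (_ | (a | b)) hz
        · exact absurd hz hvS
        · have hz' : v ∈ DA.χ a := hz
          have hre : (DA.T.graph.induce {t | v ∈ DA.χ t}).Reachable ⟨a, hz'⟩
              ⟨a0, ha0⟩ := (hA1 v hvA).preconnected _ _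
          exact reach_image_mono (mergeEmbA DA.T DB.T)
            (T := {t | v ∈ (mergeDecomp DA DB (SA ∪ SB)).χ t})
            (fun t ht => ht) hz' ha0 hre
        · exact absurd (hB0 b hz) hvB
      · have hvA : v ∉ A := fun ha => hnot ⟨ha, hvB⟩
        obtain ⟨⟨b0, hb0⟩⟩ := (hB1 v hvB).nonempty
        refine connected_of_base (x0 := some (Sum.inr b0)) hb0 ?_
        rintro (_ | (a | b)) hz
        · exact absurd hz hvS
        · exact absurd (hA0 a hz) hvA
        · have hz' : v ∈ DB.χ b := hz
          have hre : (DB.T.graph.induce {t | v ∈ DB.χ t}).Reachable ⟨b, hz'⟩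
              ⟨b0, hb0⟩ := (hB1 v hvB).preconnected _ _
          exact reach_image_mono (mergeEmbB DA.T DB.T)
            (T := {t | v ∈ (mergeDecomp DA DB (SA ∪ SB)).χ t})
            (fun t ht => ht) hz' hb0 hre
  · -- edges
    intro u v _ _ huv
    have hu : u ∈ A ∪ B := by rw [hsep.1]; exact Set.mem_univ u
    have hv : v ∈ A ∪ B := by rw [hsep.1]; exact Set.mem_univ v
    have key : (u ∈ A ∧ v ∈ A) ∨ (u ∈ B ∧ v ∈ B) := by
      rcases hu with hu | hu <;> rcases hv with hv | hv
      · exact Or.inl ⟨hu, hv⟩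
      · by_cases h1 : v ∈ A
        · exact Or.inl ⟨hu, h1⟩
        · by_cases h2 : u ∈ B
          · exact Or.inr ⟨h2, hv⟩
          · exact absurd huv (hsep.2 u ⟨hu, h2⟩ v ⟨hv, h1⟩)
      · by_cases h1 : u ∈ A
        · exact Or.inl ⟨h1, hv⟩
        · by_cases h2 : v ∈ B
          · exact Or.inr ⟨hu, h2⟩
          · exact absurd huv.symm (hsep.2 v ⟨hv, h2⟩ u ⟨hu, h1⟩)
      · exact Or.inr ⟨hu, hv⟩
    rcases key with ⟨h1, h2⟩ | ⟨h1, h2⟩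
    · obtain ⟨t, ht1, ht2⟩ := hA2 u v h1 h2 huv
      exact ⟨some (Sum.inl t), ht1, ht2⟩
    · obtain ⟨t, ht1, ht2⟩ := hB2 u v h1 h2 huv
      exact ⟨some (Sum.inr t), ht1, ht2⟩
  · -- uniqueness of bags of leaf vertices
    intro v hv
    rcases hv with hvL | hvL
    · obtain ⟨t0, ht0, huniq⟩ := hA3 v hvL
      refine ⟨some (Sum.inl t0), ht0, ?_⟩
      rintro (_ | (a | b)) ht
      · rcases ht with h | h
        · exact (hSA3' v h hvL).elim
        · exact (hSA3' v (hABA v (hA0' hvL) (hSBB h)) hvL).elim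
      · exact congrArg (fun x => some (Sum.inl x)) (huniq a ht)
      · exact (hBLA v (hB0 b ht) hvL).elim
    · obtain ⟨t0, ht0, huniq⟩ := hB3 v hvL
      refine ⟨some (Sum.inr t0), ht0, ?_⟩
      rintro (_ | (a | b)) ht
      · rcases ht with h | h
        · exact (hALB v (hSAA h) hvL).elim
        · exact (hSB3' v h hvL).elim
      · exact (hALB v (hA0 a ht) hvL).elim
      · exact congrArg (fun x => some (Sum.inr x)) (huniq b ht)
  · -- leaf condition
    intro v hv t ht
    rcases hv with hvL | hvL
    · rcases t with _ | (a | b)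
      · rcases ht with h | h
        · exact (hSA3' v h hvL).elim
        · exact (hSA3' v (hABA v (hA0' hvL) (hSBB h)) hvL).elim
      · have hleaf := hA4 v hvL a ht
        rintro (_ | (a' | b')) hu
        · simp [mergeDecomp, RTree.merge, mergeParent] at hu
        · simp only [mergeDecomp, RTree.merge, mergeParent] at hu
          split_ifs at hu <;>
            exact congrArg (fun x => some (Sum.inl x)) (hleaf a' (by simpa using hu))
        · simp only [mergeDecomp, RTree.merge, mergeParent] at hu
          split_ifs at hu <;> simp_all
      · exact (hBLA v (hB0 b ht) hvL).elim
    · rcases t with _ | (a | b)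
      · rcases ht with h | h
        · exact (hALB v (hSAA h) hvL).elim
        · exact (hSB3' v h hvL).elim
      · exact (hALB v (hA0 a ht) hvL).elim
      · have hleaf := hB4 v hvL b ht
        rintro (_ | (a' | b')) hu
        · simp [mergeDecomp, RTree.merge, mergeParent] at hu
        · simp only [mergeDecomp, RTree.merge, mergeParent] at hu
          split_ifs at hu <;> simp_all
        · simp only [mergeDecomp, RTree.merge, mergeParent] at hu
          split_ifs at hu <;>
            exact congrArg (fun x => some (Sum.inr x)) (hleaf b' (by simpa using hu))
  · -- bags restricted to L induce graphs in H
    rintro (_ | (a | b))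
    · have he : (SA ∪ SB) ∩ (DA.L ∪ DB.L) = ∅ := by
        ext x
        simp only [Set.mem_inter_iff, Set.mem_union, Set.mem_empty_iff_false, iff_false,
          not_and]
        rintro (h | h) (h' | h')
        · exact hSA3' x h h'
        · exact hALB x (hSAA h) h'
        · exact hBLA x (hSBB h) h'
        · exact hSB3' x h h'
      show H (G.induce ((SA ∪ SB) ∩ (DA.L ∪ DB.L)))
      rw [he]
      exact hnull _ (by simp) _
    · have he : DA.χ a ∩ (DA.L ∪ DB.L) = DA.χ a ∩ DA.L := by
        ext x
        simp only [Set.mem_inter_iff, Set.mem_union]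
        constructor
        · rintro ⟨hx, h | h⟩
          · exact ⟨hx, h⟩
          · exact (hALB x (hA0 a hx) h).elim
        · rintro ⟨hx, h⟩; exact ⟨hx, Or.inl h⟩
      show H (G.induce (DA.χ a ∩ (DA.L ∪ DB.L)))
      rw [he]
      exact hA5 a
    · have he : DB.χ b ∩ (DA.L ∪ DB.L) = DB.χ b ∩ DB.L := by
        ext x
        simp only [Set.mem_inter_iff, Set.mem_union]
        constructor
        · rintro ⟨hx, h | h⟩
          · exact (hBLA x (hB0 b hx) h).elim
          · exact ⟨hx, h⟩
        · rintro ⟨hx, h⟩; exact ⟨hx, Or.inr h⟩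
      show H (G.induce (DB.χ b ∩ (DA.L ∪ DB.L)))
      rw [he]
      exact hB5 b
  · -- width bound
    rw [PreDecomp.width, Nat.sub_le_iff_le_add]
    haveI : Nonempty (mergeDecomp DA DB (SA ∪ SB)).T.ι := ⟨none⟩
    apply csSup_le (Set.range_nonempty _)
    rintro n ⟨t, rfl⟩
    have hbddA : BddAbove (Set.range fun t => (DA.χ t \ DA.L).ncard) := by
      refine ⟨Fintype.card V, ?_⟩
      rintro n ⟨t, rfl⟩
      have := Set.ncard_le_ncard (Set.subset_univ (DA.χ t \ DA.L)) (Set.toFinite _)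
      simpa [Set.ncard_univ, Nat.card_eq_fintype_card] using this
    have hbddB : BddAbove (Set.range fun t => (DB.χ t \ DB.L).ncard) := by
      refine ⟨Fintype.card V, ?_⟩
      rintro n ⟨t, rfl⟩
      have := Set.ncard_le_ncard (Set.subset_univ (DB.χ t \ DB.L)) (Set.toFinite _)
      simpa [Set.ncard_univ, Nat.card_eq_fintype_card] using this
    rcases t with _ | (a | b)
    · show ((SA ∪ SB) \ (DA.L ∪ DB.L)).ncard ≤ _ + 1
      have h1 : ((SA ∪ SB) \ (DA.L ∪ DB.L)).ncard ≤ (SA ∪ SB).ncard :=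
        Set.ncard_le_ncard Set.diff_subset (Set.toFinite _)
      have h2 : (SA ∪ SB).ncard - 1 ≤ max (max DA.width DB.width) ((SA ∪ SB).ncard - 1) :=
        le_max_right _ _
      omega
    · show (DA.χ a \ (DA.L ∪ DB.L)).ncard ≤ _ + 1
      have h1 : DA.χ a \ (DA.L ∪ DB.L) ⊆ DA.χ a \ DA.L :=
        Set.diff_subset_diff_right Set.subset_union_left
      have h2 : (DA.χ a \ DA.L).ncard ≤ sSup (Set.range fun t => (DA.χ t \ DA.L).ncard) :=
        le_csSup hbddA ⟨a, rfl⟩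
      have h3 : DA.width = sSup (Set.range fun t => (DA.χ t \ DA.L).ncard) - 1 := rfl
      have h4 : DA.width ≤ max (max DA.width DB.width) ((SA ∪ SB).ncard - 1) :=
        le_trans (le_max_left _ _) (le_max_left _ _)
      have h5 := Set.ncard_le_ncard h1 (Set.toFinite _)
      omega
    · show (DB.χ b \ (DA.L ∪ DB.L)).ncard ≤ _ + 1
      have h1 : DB.χ b \ (DA.L ∪ DB.L) ⊆ DB.χ b \ DB.L :=
        Set.diff_subset_diff_right Set.subset_union_right
      have h2 : (DB.χ b \ DB.L).ncard ≤ sSup (Set.range fun t => (DB.χ t \ DB.L).ncard) :=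
        le_csSup hbddB ⟨b, rfl⟩
      have h3 : DB.width = sSup (Set.range fun t => (DB.χ t \ DB.L).ncard) - 1 := rfl
      have h4 : DB.width ≤ max (max DA.width DB.width) ((SA ∪ SB).ncard - 1) :=
        le_trans (le_max_right _ _) (le_max_left _ _)
      have h5 := Set.ncard_le_ncard h1 (Set.toFinite _)
      omega
end

section
/- Let H be a hereditary and union-closed class of graphs, let G be a graph, let X be an H-deletion set in G of minimum size among all H-deletion sets in G, let k ≥ 0 be an integer, and let Z ⊆ V(G) be weakly (H,k)-separable. Then λ_G(Z,X) ≤ 2k. -/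
variable {V : Type}

private lemma walk_aux {V : Type} (G : SimpleGraph V) (C S X : Set V)
    (hN : ∀ v ∈ C, ∀ u : V, G.Adj v u → u ∉ C → u ∈ S) :
    ∀ {x y : V} (p : G.Walk x y), x ∈ C → y ∈ X →
      ∃ v ∈ p.support, v ∈ S ∪ (X ∩ C) := by
  intro x y p
  induction p with
  | nil =>
    intro hx hy
    exact ⟨_, by simp, Or.inr ⟨hy, hx⟩⟩
  | @cons u v w h q ih =>
    intro hx hy
    by_cases hb : v ∈ C
    · obtain ⟨z, hz, hzP⟩ := ih hb hy
      exact ⟨z, by simp [hz], hzP⟩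
    · exact ⟨v, by simp, Or.inl (hN u hx v h hb)⟩

/-- if `X` is a minimum-size `H`-deletion set in `G` and `Z` is
weakly `(H,k)`-separable, then `λ_G(Z,X) ≤ 2k`. -/
theorem lam_le_of_min_deletionSet {V : Type} [Fintype V] (H : GraphClass)
    (hher : Hereditary H) (hun : UnionClosed H)
    (G : SimpleGraph V) (X : Set V) (hX : IsDeletionSet H G X)
    (hmin : ∀ Y : Set V, IsDeletionSet H G Y → X.ncard ≤ Y.ncard)
    (k : ℕ) (Z : Set V) (hZ : WeaklySeparable H G k Z) :
    lam G Z X ≤ 2 * k := by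
  obtain ⟨C, S, ⟨hdisj, hC, hSk, hN⟩, hcov⟩ := hZ
  set R : Set V := Cᶜ ∩ Sᶜ ∩ Xᶜ with hRdef
  -- (X \ C) ∪ S is a deletion set
  have hHR : H (G.induce R) := by
    refine hher (G.induce Xᶜ) (G.induce R) hX ?_
    exact ⟨⟨fun v => ⟨v.1, v.2.2⟩, fun a b hab => by
      have h2 := congrArg Subtype.val hab
      exact Subtype.ext h2⟩, Iff.rfl⟩
  have hsum : H ((G.induce C) ⊕g (G.induce R)) := hun _ _ hC hHR
  have hdel : IsDeletionSet H G ((X \ C) ∪ S) := by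
    classical
    refine hher _ _ hsum ?_
    refine ⟨⟨fun v => if h : v.1 ∈ C then Sum.inl ⟨v.1, h⟩
      else Sum.inr ⟨v.1, ⟨⟨h, fun hS => v.2 (Or.inr hS)⟩,
        fun hXv => v.2 (Or.inl ⟨hXv, h⟩)⟩⟩, ?_⟩, ?_⟩
    · intro a b hab
      by_cases ha : a.1 ∈ C <;> by_cases hb : b.1 ∈ C <;>
        simp only [ha, hb, dif_pos, dif_neg, not_false_iff] at hab
      · injection hab with h2
        have h3 := congrArg Subtype.val h2
        exact Subtype.ext h3
      · exact absurd hab (by simp)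
      · exact absurd hab (by simp)
      · injection hab with h2
        have h3 := congrArg Subtype.val h2
        exact Subtype.ext h3
    · intro a b
      change (_ ⊕g _).Adj (dite _ _ _) (dite _ _ _) ↔ _
      by_cases ha : a.1 ∈ C <;> by_cases hb : b.1 ∈ C <;>
        simp only [ha, hb, dif_pos, dif_neg, not_false_iff]
      · exact Iff.rfl
      · simp only [SimpleGraph.sum_adj]
        exact ⟨fun hab => hab.elim, fun hab =>
          absurd (hN a.1 ha b.1 hab hb) (fun hS => b.2 (Or.inr hS))⟩
      · simp only [SimpleGraph.sum_adj]
        exact ⟨fun hab => hab.elim, fun hab =>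
          absurd (hN b.1 hb a.1 hab.symm ha) (fun hS => a.2 (Or.inr hS))⟩
      · exact Iff.rfl
  -- minimality gives |X ∩ C| ≤ |S|
  have hXC : (X ∩ C).ncard ≤ S.ncard := by
    have h1 : X.ncard ≤ ((X \ C) ∪ S).ncard := hmin _ hdel
    have h2 : ((X \ C) ∪ S).ncard ≤ (X \ C).ncard + S.ncard := Set.ncard_union_le _ _
    have h3 : (X ∩ C).ncard + (X \ C).ncard = X.ncard :=
      Set.ncard_inter_add_ncard_diff_eq_ncard X C
    omega
  -- the separator
  set P : Set V := S ∪ (X ∩ C) with hPdef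
  have hsep : IsSeparator G Z X P := by
    intro x y hx hy p
    by_cases hxS : x ∈ S
    · exact ⟨x, p.start_mem_support, Or.inl hxS⟩
    · have hxC : x ∈ C := (hcov hx).resolve_right hxS
      exact walk_aux G C S X hN p hxC hy
  have hPcard : P.ncard ≤ 2 * k := by
    have h4 : P.ncard ≤ S.ncard + (X ∩ C).ncard := Set.ncard_union_le _ _
    omega
  exact le_trans (Nat.sInf_le ⟨P, hsep, rfl⟩) hPcard
end
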